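/- Let V, V₁, V₂ be complex Hilbert spaces, (K, J) a Krein space, and T : V → K, T₁ : V₁ → K, T₂ : V₂ → K bounded injective linear operators with T T^[*] = T₁ T₁^[*] + T₂ T₂^[*]. Then there exist injective linear contractions R₁ : V₁ → V and R₂ : V₂ → V (i.e. ‖R₁‖ ≤ 1, ‖R₂‖ ≤ 1) such that T₁ = T R₁, T₂ = T R₂ and R₁ R₁† + R₂ R₂† = I on V, where R_j† denotes the Hilbert-space adjoint. -/

import Mathlib

open ContinuousLinearMap
open scoped InnerProductSpace ComplexInnerProductSpace

/-- Douglas-type factorization along a dense-range map. -/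
theorem douglas_aux {K V W : Type*}
    [NormedAddCommGroup K] [InnerProductSpace ℂ K] [CompleteSpace K]
    [NormedAddCommGroup V] [InnerProductSpace ℂ V] [CompleteSpace V]
    [NormedAddCommGroup W] [InnerProductSpace ℂ W] [CompleteSpace W]
    (A : K →L[ℂ] V) (B : K →L[ℂ] W)
    (hd : DenseRange (A : K → V)) (hle : ∀ y, ‖B y‖ ≤ ‖A y‖) :
    ∃ C : V →L[ℂ] W, ‖C‖ ≤ 1 ∧ ∀ y, C (A y) = B y := by
  have hker : LinearMap.ker (A : K →ₗ[ℂ] V) ≤ LinearMap.ker (B : K →ₗ[ℂ] W) := by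
    intro y hy
    have hy' : A y = 0 := hy
    have : ‖B y‖ ≤ 0 := by simpa [hy'] using hle y
    simpa [LinearMap.mem_ker] using norm_le_zero_iff.mp this
  set E : Submodule ℂ V := LinearMap.range (A : K →ₗ[ℂ] V) with hE
  let h₀ : (K ⧸ LinearMap.ker (A : K →ₗ[ℂ] V)) →ₗ[ℂ] W :=
    (LinearMap.ker (A : K →ₗ[ℂ] V)).liftQ (B : K →ₗ[ℂ] W) hker
  let h : E →ₗ[ℂ] W :=
    h₀ ∘ₗ (LinearMap.quotKerEquivRange (A : K →ₗ[ℂ] V)).symm.toLinearMap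
  have key : ∀ y : K, h ⟨A y, LinearMap.mem_range_self _ y⟩ = B y := by
    intro y
    have h1 : (LinearMap.quotKerEquivRange (A : K →ₗ[ℂ] V)).symm
        ⟨A y, LinearMap.mem_range_self _ y⟩ = Submodule.Quotient.mk y :=
      LinearMap.quotKerEquivRange_symm_apply_image _ y _
    simp only [h, LinearMap.comp_apply, LinearEquiv.coe_toLinearMap, h1]
    simp [h₀, Submodule.liftQ_apply]
  have bound : ∀ x : E, ‖h x‖ ≤ 1 * ‖x‖ := by
    rintro ⟨x, hx⟩
    obtain ⟨y, rfl⟩ := hx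
    have hk : ‖h (⟨(A : K →ₗ[ℂ] V) y, ⟨y, rfl⟩⟩ : E)‖ = ‖B y‖ := congrArg norm (key y)
    rw [hk]
    simpa using hle y
  let hC : E →L[ℂ] W := h.mkContinuous 1 bound
  have hCnorm : ‖hC‖ ≤ 1 := LinearMap.mkContinuous_norm_le h zero_le_one bound
  have hdense : DenseRange (E.subtypeL : E → V) := by
    have : Dense (E : Set V) := by
      have : (E : Set V) = Set.range A := by
        ext v; simp [hE, LinearMap.mem_range, Set.mem_range]
      rw [this]; exact hd
    exact this.denseRange_val
  have h_e : ∀ x : E, ‖x‖ ≤ (1 : NNReal) * ‖E.subtypeL x‖ := by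
    intro x; simp
  refine ⟨hC.extend E.subtypeL, ?_, ?_⟩
  · calc ‖_‖ ≤ (1 : NNReal) * ‖hC‖ := ContinuousLinearMap.opNorm_extend_le hC hdense h_e
    _ ≤ 1 := by simpa using hCnorm
  · intro y
    have : hC.extend E.subtypeL
        (E.subtypeL ⟨A y, LinearMap.mem_range_self _ y⟩)
        = hC ⟨A y, LinearMap.mem_range_self _ y⟩ :=
      ContinuousLinearMap.extend_eq _ hdense
        (isUniformEmbedding_of_bound _ h_e).isUniformInducing _
    have hk : hC ⟨A y, LinearMap.mem_range_self _ y⟩ = B y := key y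
    rw [hk] at this
    simpa using this

set_option maxHeartbeats 1000000

theorem stmt_0
    {K V V₁ V₂ : Type*}
    [NormedAddCommGroup K] [InnerProductSpace ℂ K] [CompleteSpace K]
    [NormedAddCommGroup V] [InnerProductSpace ℂ V] [CompleteSpace V]
    [NormedAddCommGroup V₁] [InnerProductSpace ℂ V₁] [CompleteSpace V₁]
    [NormedAddCommGroup V₂] [InnerProductSpace ℂ V₂] [CompleteSpace V₂]
    (J : K →L[ℂ] K) (hJsa : IsSelfAdjoint J) (hJ2 : J ∘L J = 1)
    (T : V →L[ℂ] K) (T₁ : V₁ →L[ℂ] K) (T₂ : V₂ →L[ℂ] K)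
    (hTinj : Function.Injective T) (hT₁inj : Function.Injective T₁)
    (hT₂inj : Function.Injective T₂)
    (hsum : T ∘L (adjoint T ∘L J) = T₁ ∘L (adjoint T₁ ∘L J) + T₂ ∘L (adjoint T₂ ∘L J)) :
    ∃ (R₁ : V₁ →L[ℂ] V) (R₂ : V₂ →L[ℂ] V),
      Function.Injective R₁ ∧ Function.Injective R₂ ∧
      ‖R₁‖ ≤ 1 ∧ ‖R₂‖ ≤ 1 ∧
      T₁ = T ∘L R₁ ∧ T₂ = T ∘L R₂ ∧
      R₁ ∘L adjoint R₁ + R₂ ∘L adjoint R₂ = 1 := by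
  -- kill the `J`s
  have hsum' : T ∘L adjoint T = T₁ ∘L adjoint T₁ + T₂ ∘L adjoint T₂ := by
    ext z
    have h := congrFun (congrArg (DFunLike.coe) hsum) (J z)
    have hz : J (J z) = z := by
      have h2 := congrFun (congrArg (DFunLike.coe) hJ2) z
      simpa using h2
    simp only [ContinuousLinearMap.comp_apply, ContinuousLinearMap.add_apply, hz] at h
    simpa using h
  -- the basic inner product identity
  have hinner : ∀ y y' : K, ⟪(adjoint T) y, (adjoint T) y'⟫_ℂ
      = ⟪(adjoint T₁) y, (adjoint T₁) y'⟫_ℂ + ⟪(adjoint T₂) y, (adjoint T₂) y'⟫_ℂ := by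
    intro y y'
    have h := congrFun (congrArg (DFunLike.coe) hsum') y'
    simp only [ContinuousLinearMap.comp_apply, ContinuousLinearMap.add_apply] at h
    rw [adjoint_inner_left, h, inner_add_right, adjoint_inner_left, adjoint_inner_left]
  -- norm identity and bounds
  have hnorm : ∀ y : K, ‖(adjoint T) y‖ ^ 2
      = ‖(adjoint T₁) y‖ ^ 2 + ‖(adjoint T₂) y‖ ^ 2 := by
    intro y
    have h := hinner y y
    simp only [inner_self_eq_norm_sq_to_K] at h
    exact_mod_cast h
  have hle₁ : ∀ y : K, ‖(adjoint T₁) y‖ ≤ ‖(adjoint T) y‖ := by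
    intro y
    have h := hnorm y
    nlinarith [sq_nonneg (‖(adjoint T₂) y‖), norm_nonneg ((adjoint T₁) y),
      norm_nonneg ((adjoint T) y), sq_nonneg (‖(adjoint T) y‖ - ‖(adjoint T₁) y‖),
      sq_nonneg (‖(adjoint T) y‖ + ‖(adjoint T₁) y‖)]
  have hle₂ : ∀ y : K, ‖(adjoint T₂) y‖ ≤ ‖(adjoint T) y‖ := by
    intro y
    have h := hnorm y
    nlinarith [sq_nonneg (‖(adjoint T₁) y‖), norm_nonneg ((adjoint T₂) y),
      norm_nonneg ((adjoint T) y), sq_nonneg (‖(adjoint T) y‖ - ‖(adjoint T₂) y‖),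
      sq_nonneg (‖(adjoint T) y‖ + ‖(adjoint T₂) y‖)]
  -- density of the range of `adjoint T`
  set E : Submodule ℂ V := LinearMap.range ((adjoint T) : K →ₗ[ℂ] V) with hE
  have hEbot : Eᗮ = ⊥ := by
    rw [Submodule.eq_bot_iff]
    intro v hv
    have h := (Submodule.mem_orthogonal _ _).mp hv ((adjoint T) (T v))
      (LinearMap.mem_range_self _ _)
    rw [adjoint_inner_left] at h
    have hTv : T v = 0 := inner_self_eq_zero.mp h
    exact hTinj (by rw [hTv, map_zero])
  have hrange : Set.range ((adjoint T) : K → V) = (E : Set V) := by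
    ext v; simp [hE]
  have hdense : DenseRange ((adjoint T) : K → V) := by
    have h1 : E.topologicalClosure = ⊤ := Submodule.topologicalClosure_eq_top_iff.mpr hEbot
    have h2 := congrArg (fun p : Submodule ℂ V => (p : Set V)) h1
    simp only [Submodule.topologicalClosure_coe, Submodule.top_coe] at h2
    rw [DenseRange, hrange]
    exact dense_iff_closure_eq.mpr h2
  -- Douglas factorizations
  obtain ⟨C₁, hC₁n, hC₁⟩ := douglas_aux (adjoint T) (adjoint T₁) hdense hle₁
  obtain ⟨C₂, hC₂n, hC₂⟩ := douglas_aux (adjoint T) (adjoint T₂) hdense hle₂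
  have hfact₁ : T₁ = T ∘L adjoint C₁ := by
    have hc : C₁ ∘L adjoint T = adjoint T₁ := ContinuousLinearMap.ext fun y => hC₁ y
    have h := congrArg ContinuousLinearMap.adjoint hc
    rw [adjoint_comp, adjoint_adjoint, adjoint_adjoint] at h
    exact h.symm
  have hfact₂ : T₂ = T ∘L adjoint C₂ := by
    have hc : C₂ ∘L adjoint T = adjoint T₂ := ContinuousLinearMap.ext fun y => hC₂ y
    have h := congrArg ContinuousLinearMap.adjoint hc
    rw [adjoint_comp, adjoint_adjoint, adjoint_adjoint] at h
    exact h.symm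
  refine ⟨adjoint C₁, adjoint C₂, ?_, ?_, ?_, ?_, hfact₁, hfact₂, ?_⟩
  · intro a b hab
    apply hT₁inj
    rw [hfact₁]
    simp only [ContinuousLinearMap.comp_apply, hab]
  · intro a b hab
    apply hT₂inj
    rw [hfact₂]
    simp only [ContinuousLinearMap.comp_apply, hab]
  · calc ‖adjoint C₁‖ = ‖C₁‖ := LinearIsometryEquiv.norm_map ContinuousLinearMap.adjoint C₁
    _ ≤ 1 := hC₁n
  · calc ‖adjoint C₂‖ = ‖C₂‖ := LinearIsometryEquiv.norm_map ContinuousLinearMap.adjoint C₂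
    _ ≤ 1 := hC₂n
  · rw [adjoint_adjoint, adjoint_adjoint]
    set A : V →L[ℂ] V := adjoint C₁ ∘L C₁ + adjoint C₂ ∘L C₂ with hA
    have hAfix : ∀ y : K, A ((adjoint T) y) = (adjoint T) y := by
      intro y
      have hw : ∀ y' : K, ⟪A ((adjoint T) y) - (adjoint T) y, (adjoint T) y'⟫_ℂ = 0 := by
        intro y'
        have h1 : ⟪(adjoint C₁) (C₁ ((adjoint T) y)), (adjoint T) y'⟫_ℂ
            = ⟪(adjoint T₁) y, (adjoint T₁) y'⟫_ℂ := by
          rw [adjoint_inner_left, hC₁ y, hC₁ y']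
        have h2 : ⟪(adjoint C₂) (C₂ ((adjoint T) y)), (adjoint T) y'⟫_ℂ
            = ⟪(adjoint T₂) y, (adjoint T₂) y'⟫_ℂ := by
          rw [adjoint_inner_left, hC₂ y, hC₂ y']
        rw [inner_sub_left, hA]
        simp only [ContinuousLinearMap.add_apply, ContinuousLinearMap.comp_apply,
          inner_add_left, h1, h2, ← hinner y y']
        ring
      have hmem : A ((adjoint T) y) - (adjoint T) y ∈ Eᗮ := by
        rw [Submodule.mem_orthogonal]
        rintro u ⟨y', rfl⟩
        rw [← inner_conj_symm,
          show (((adjoint T : K →ₗ[ℂ] V)) y' : V) = (adjoint T) y' from rfl,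
          hw y', map_zero]
      rw [hEbot, Submodule.mem_bot] at hmem
      exact sub_eq_zero.mp hmem
    have hcoe : (A : V → V) = ((1 : V →L[ℂ] V) : V → V) := by
      apply Continuous.ext_on hdense A.continuous (1 : V →L[ℂ] V).continuous
      rintro _ ⟨y, rfl⟩
      simpa using hAfix y
    exact ContinuousLinearMap.coeFn_injective hcoe
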